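/- There exist a constant C > 0 and ε₀ ∈ (0,1) such that for every ε ∈ (0, ε₀) and all t₁, t₂ ∈ ℝ, the spiral map satisfies ‖g_ε(t₁) − g_ε(t₂)‖ ≥ (1 − C/ln²(1/ε))·|t₁ − t₂| (i.e., g_ε contracts no pair of points by more than a factor 1 + O(1/ln²(1/ε))). -/

import Mathlib

set_option maxHeartbeats 1000000


/-- The point `(a, b) ∈ ℝ²` (Euclidean plane). -/
noncomputable def pt (a b : ℝ) : EuclideanSpace ℝ (Fin 2) :=
  (WithLp.equiv 2 (Fin 2 → ℝ)).symm ![a, b]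

/-- The angle `φ_ε(t) = π ln(1/|t|) / ln(1/ε)`. -/
noncomputable def spiralPhi (ε t : ℝ) : ℝ :=
  Real.pi * Real.log (1 / |t|) / Real.log (1 / ε)

/-- The spiral map `g_ε : ℝ → ℝ²`. -/
noncomputable def spiral (ε t : ℝ) : EuclideanSpace ℝ (Fin 2) :=
  if 1 ≤ |t| then pt t 0
  else if |t| ≤ ε then pt (-t) 0
  else pt (t * Real.cos (spiralPhi ε t)) (t * Real.sin (spiralPhi ε t))

open Real

noncomputable def theta (ε t : ℝ) : ℝ :=
  π * min (max (Real.log (1/t)) 0) (Real.log (1/ε)) / Real.log (1/ε)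

lemma pt_add (a b c d : ℝ) : pt a b + pt c d = pt (a+c) (b+d) := by
  simp only [pt]
  ext i
  fin_cases i <;> simp

lemma norm_pt (a b : ℝ) : ‖pt a b‖ = Real.sqrt (a^2+b^2) := by
  rw [EuclideanSpace.norm_eq]
  simp [pt, Fin.sum_univ_two]

lemma spiral_neg (ε t : ℝ) : spiral ε (-t) = - spiral ε t := by
  have habs : |(-t)| = |t| := abs_neg t
  have hphi : spiralPhi ε (-t) = spiralPhi ε t := by simp [spiralPhi]
  unfold spiral
  rw [habs, hphi]
  split_ifs with h1 h2
  · simp only [pt]; ext i; fin_cases i <;> simp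
  · simp only [pt]; ext i; fin_cases i <;> simp
  · simp only [pt]; ext i; fin_cases i <;> simp [neg_mul]

lemma spiral_pos_eq {ε t : ℝ} (hε : 0 < ε) (hε1 : ε < 1) (ht : 0 < t) :
    spiral ε t = pt (t * Real.cos (theta ε t)) (t * Real.sin (theta ε t)) := by
  have hL : 0 < Real.log (1/ε) := by
    apply Real.log_pos
    rw [lt_div_iff₀ hε]; linarith
  have habs : |t| = t := abs_of_pos ht
  unfold spiral theta
  rw [habs]
  split_ifs with h1 h2
  · -- 1 ≤ t : log (1/t) ≤ 0
    have h : Real.log (1/t) ≤ 0 := by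
      apply Real.log_nonpos
      · positivity
      · rw [div_le_one ht]; linarith
    rw [max_eq_right h, min_eq_left hL.le, mul_zero, zero_div, Real.cos_zero,
      Real.sin_zero, mul_one, mul_zero]
  · -- t ≤ ε : log(1/t) ≥ L
    have h : Real.log (1/ε) ≤ Real.log (1/t) := by
      apply Real.log_le_log (by positivity)
      apply div_le_div_of_nonneg_left (by norm_num) ht h2
    have hmax : max (Real.log (1/t)) 0 = Real.log (1/t) := max_eq_left (hL.le.trans h)
    rw [hmax, min_eq_right h]
    rw [mul_div_assoc, div_self hL.ne', mul_one, Real.cos_pi, Real.sin_pi,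
      mul_zero, mul_neg_one]
  · -- middle
    have h2' : ε < t := lt_of_not_ge h2
    rw [max_eq_left, min_eq_left]
    · unfold spiralPhi; rw [habs]
    · apply Real.log_le_log (by positivity)
      apply div_le_div_of_nonneg_left (by norm_num) hε h2'.le
    · apply Real.log_nonneg
      rw [le_div_iff₀ ht]; push_neg at h1; linarith

lemma norm_spiral {ε : ℝ} (hε : 0 < ε) (hε1 : ε < 1) (t : ℝ) : ‖spiral ε t‖ = |t| := by
  rcases lt_trichotomy t 0 with ht | rfl | ht
  · have := spiral_pos_eq hε hε1 (t := -t) (by linarith)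
    rw [show t = -(-t) by ring, spiral_neg, norm_neg, this, norm_pt, abs_neg]
    rw [show (-t * cos (theta ε (-t)))^2 + (-t * sin (theta ε (-t)))^2
        = (-t)^2 * (sin (theta ε (-t))^2 + cos (theta ε (-t))^2) by ring,
      Real.sin_sq_add_cos_sq, mul_one, Real.sqrt_sq_eq_abs, abs_neg]
  · have h0 : spiral ε 0 = pt 0 0 := by
      unfold spiral
      rw [abs_zero]
      rw [if_neg (by norm_num), if_pos hε.le, neg_zero]
    rw [h0, norm_pt]
    norm_num
  · rw [spiral_pos_eq hε hε1 ht, norm_pt,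
      show (t * cos (theta ε t))^2 + (t * sin (theta ε t))^2
        = t^2 * (sin (theta ε t)^2 + cos (theta ε t)^2) by ring,
      Real.sin_sq_add_cos_sq, mul_one, Real.sqrt_sq_eq_abs]

lemma sq_le_exp {x : ℝ} (hx : 0 ≤ x) : x^2 ≤ Real.exp x := by
  have h := Real.add_one_le_exp (x/2 - 1)
  have he : Real.exp (x/2 - 1) = Real.exp (x/2) / Real.exp 1 := by
    rw [Real.exp_sub]
  have he1 : 2 ≤ Real.exp 1 := by nlinarith [Real.add_one_le_exp 1]
  have hE : 0 < Real.exp (x/2) := Real.exp_pos _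
  have hxE : x ≤ Real.exp (x/2) := by
    rw [he] at h
    have h' : (x/2 - 1 + 1) * Real.exp 1 ≤ Real.exp (x/2) := by
      rw [← le_div_iff₀ (Real.exp_pos 1)]; exact h
    nlinarith
  have : Real.exp (x/2) * Real.exp (x/2) = Real.exp x := by
    rw [← Real.exp_add]; ring_nf
  nlinarith

lemma mul_log_sq_le {s u : ℝ} (hu : 0 < u) (hsu : u ≤ s) :
    u * (Real.log s - Real.log u)^2 ≤ s := by
  have hs : 0 < s := lt_of_lt_of_le hu hsu
  have hx : 0 ≤ Real.log s - Real.log u := by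
    have := Real.log_le_log hu hsu
    linarith
  have he : Real.exp (Real.log s - Real.log u) = s / u := by
    rw [Real.exp_sub, Real.exp_log hs, Real.exp_log hu]
  have := sq_le_exp hx
  rw [he] at this
  calc u * (Real.log s - Real.log u)^2 ≤ u * (s/u) := by
        apply mul_le_mul_of_nonneg_left this hu.le
    _ = s := by field_simp

lemma theta_lip {ε s u : ℝ} (hε : 0 < ε) (hε1 : ε < 1) (hu : 0 < u) (hsu : u ≤ s) :
    |theta ε s - theta ε u| ≤ π * (Real.log s - Real.log u) / Real.log (1/ε) := by
  have hs : 0 < s := lt_of_lt_of_le hu hsu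
  have hL : 0 < Real.log (1/ε) := by
    apply Real.log_pos
    rw [lt_div_iff₀ hε]; linarith
  set L := Real.log (1/ε)
  set a := max (Real.log (1/s)) 0
  set b := max (Real.log (1/u)) 0
  have h1 : |a - b| ≤ |Real.log (1/s) - Real.log (1/u)| := abs_max_sub_max_le_abs _ _ _
  have h2 : |min a L - min b L| ≤ max |a - b| |L - L| := abs_min_sub_min_le_max _ _ _ _
  rw [sub_self, abs_zero, max_eq_left (abs_nonneg _)] at h2
  have hlog : |Real.log (1/s) - Real.log (1/u)| = Real.log s - Real.log u := by
    rw [one_div, one_div, Real.log_inv, Real.log_inv]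
    rw [abs_sub_comm, abs_of_nonneg]
    · ring
    · have := Real.log_le_log hu hsu; linarith
  have h3 : |min a L - min b L| ≤ Real.log s - Real.log u := by
    rw [hlog] at h1; exact h2.trans h1
  unfold theta
  rw [div_sub_div_same, ← mul_sub, abs_div, abs_mul, abs_of_nonneg Real.pi_pos.le,
    abs_of_pos hL, mul_div_assoc, mul_div_assoc]
  apply mul_le_mul_of_nonneg_left _ Real.pi_pos.le
  gcongr

lemma key {ε s u : ℝ} (hε : 0 < ε) (hε4 : ε < Real.exp (-4)) (hu : 0 < u) (hsu : u ≤ s) :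
    (1 - π^2 / (Real.log (1/ε))^2) * (s + u) ≤ ‖spiral ε s + spiral ε u‖ := by
  have hs : 0 < s := lt_of_lt_of_le hu hsu
  have hε1 : ε < 1 := hε4.trans (by rw [Real.exp_lt_one_iff]; norm_num)
  have hL4 : 4 < Real.log (1/ε) := by
    have := Real.log_lt_log hε hε4
    rw [Real.log_exp] at this
    rw [one_div, Real.log_inv]
    linarith
  set L := Real.log (1/ε) with hLdef
  have hL : 0 < L := by linarith
  set P := π^2 / L^2 with hPdef
  have hP0 : 0 < P := by positivity
  have hP1 : P < 1 := by
    rw [hPdef, div_lt_one (by positivity)]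
    nlinarith [Real.pi_le_four, Real.pi_pos]
  rw [spiral_pos_eq hε hε1 hs, spiral_pos_eq hε hε1 hu, pt_add, norm_pt]
  set A := theta ε s
  set B := theta ε u
  rw [Real.le_sqrt (by nlinarith) (by positivity)]
  have hcos : Real.cos A * Real.cos B + Real.sin A * Real.sin B = Real.cos (A - B) :=
    (Real.cos_sub A B).symm
  have hcb : 1 - (A-B)^2/2 ≤ Real.cos (A - B) := Real.one_sub_sq_div_two_le_cos
  have hlip := theta_lip hε hε1 hu hsu
  set x := Real.log s - Real.log u with hxdef
  have hx0 : 0 ≤ x := by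
    have := Real.log_le_log hu hsu; rw [hxdef]; linarith
  have hd2 : (A - B)^2 ≤ P * x^2 := by
    have h1 : (A-B)^2 ≤ (π * x / L)^2 := by
      rw [← sq_abs (A-B)]
      apply pow_le_pow_left₀ (abs_nonneg _) hlip 2
    calc (A-B)^2 ≤ (π * x / L)^2 := h1
      _ = P * x^2 := by rw [hPdef]; field_simp
  have hux : u * x^2 ≤ s := mul_log_sq_le hu hsu
  have hexp : (s * Real.cos A + u * Real.cos B)^2 + (s * Real.sin A + u * Real.sin B)^2
      = s^2 + u^2 + 2*s*u*(Real.cos (A-B)) := by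
    have h1 : Real.sin A^2 + Real.cos A^2 = 1 := Real.sin_sq_add_cos_sq A
    have h2 : Real.sin B^2 + Real.cos B^2 = 1 := Real.sin_sq_add_cos_sq B
    rw [← hcos]; nlinarith [h1, h2]
  rw [hexp]
  have hsu0 : 0 < s * u := mul_pos hs hu
  have hstep1 : s*u*(A-B)^2 ≤ P * s^2 := by
    calc s*u*(A-B)^2 ≤ s*u*(P*x^2) := by
          apply mul_le_mul_of_nonneg_left hd2 hsu0.le
      _ = P * (s * (u * x^2)) := by ring
      _ ≤ P * (s * s) := by
          apply mul_le_mul_of_nonneg_left _ hP0.le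
          apply mul_le_mul_of_nonneg_left hux hs.le
      _ = P * s^2 := by ring
  have h1 : 2*s*u - s*u*(A-B)^2 ≤ 2*s*u*(Real.cos (A-B)) := by nlinarith [hcb, hsu0]
  have h1' : (s+u)^2 - P*s^2 ≤ s^2 + u^2 + 2*s*u*(Real.cos (A-B)) := by nlinarith [h1, hstep1]
  have h3 : (s+u)^2 - P*(s+u)^2 ≤ (s+u)^2 - P*s^2 := by nlinarith [mul_nonneg hP0.le (mul_nonneg hs.le hu.le), mul_nonneg hP0.le (sq_nonneg u)]
  have h4 : ((1-P)*(s+u))^2 ≤ (s+u)^2 - P*(s+u)^2 := by nlinarith [sq_nonneg (s+u), mul_nonneg (mul_nonneg hP0.le (sub_nonneg.2 hP1.le)) (sq_nonneg (s+u))]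
  linarith

/-- **The spiral map does not contract distances much.** There are `C > 0` and `ε₀ ∈ (0,1)`
such that for every `ε ∈ (0, ε₀)` and all `t₁, t₂ ∈ ℝ`,
`‖g_ε t₁ - g_ε t₂‖ ≥ (1 - C/ln²(1/ε)) |t₁ - t₂|`. -/
theorem spiral_contraction_bound :
    ∃ C > (0 : ℝ), ∃ ε₀ : ℝ, 0 < ε₀ ∧ ε₀ < 1 ∧ ∀ ε : ℝ, 0 < ε → ε < ε₀ →
      ∀ t₁ t₂ : ℝ,
        (1 - C / (Real.log (1 / ε)) ^ 2) * |t₁ - t₂| ≤ ‖spiral ε t₁ - spiral ε t₂‖ := by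
  refine ⟨π^2, by positivity, Real.exp (-4), Real.exp_pos _,
    by rw [Real.exp_lt_one_iff]; norm_num, ?_⟩
  intro ε hε hε4 t₁ t₂
  have hε1 : ε < 1 := hε4.trans (by rw [Real.exp_lt_one_iff]; norm_num)
  set F := 1 - π^2 / (Real.log (1/ε))^2 with hF
  have hF1 : F ≤ 1 := by
    have : (0:ℝ) ≤ π^2 / (Real.log (1/ε))^2 := by positivity
    rw [hF]; linarith
  have key2 : ∀ a b : ℝ, 0 < a → 0 < b → F*(a+b) ≤ ‖spiral ε a + spiral ε b‖ := by
    intro a b ha hb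
    rcases le_total b a with h | h
    · exact key hε hε4 hb h
    · rw [add_comm a b, add_comm (spiral ε a)]
      exact key hε hε4 ha h
  rcases le_or_gt 0 (t₁ * t₂) with hsign | hsign
  · have heq : |t₁ - t₂| = |(|t₁| - |t₂|)| := by
      rw [← Real.sqrt_sq_eq_abs (t₁-t₂), ← Real.sqrt_sq_eq_abs (|t₁|-|t₂|)]
      congr 1
      have habs : |t₁| * |t₂| = t₁*t₂ := by rw [← abs_mul, abs_of_nonneg hsign]
      nlinarith [sq_abs t₁, sq_abs t₂]
    calc F * |t₁-t₂| ≤ 1 * |t₁-t₂| := mul_le_mul_of_nonneg_right hF1 (abs_nonneg _)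
      _ = |(|t₁| - |t₂|)| := by rw [one_mul, heq]
      _ = |‖spiral ε t₁‖ - ‖spiral ε t₂‖| := by
          rw [norm_spiral hε hε1, norm_spiral hε hε1]
      _ ≤ ‖spiral ε t₁ - spiral ε t₂‖ := abs_norm_sub_norm_le _ _
  · rcases mul_neg_iff.mp hsign with ⟨h1, h2⟩ | ⟨h1, h2⟩
    · -- 0 < t₁, t₂ < 0
      have hn : spiral ε t₂ = - spiral ε (-t₂) := by
        have h := spiral_neg ε (-t₂)
        rw [neg_neg] at h
        exact h
      rw [hn, sub_neg_eq_add, abs_of_pos (by linarith : 0 < t₁ - t₂)]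
      have := key2 t₁ (-t₂) h1 (by linarith)
      calc F * (t₁ - t₂) = F * (t₁ + -t₂) := by ring
        _ ≤ _ := this
    · -- t₁ < 0 < t₂
      have hn : spiral ε t₁ = - spiral ε (-t₁) := by
        have h := spiral_neg ε (-t₁)
        rw [neg_neg] at h
        exact h
      rw [norm_sub_rev, hn, sub_neg_eq_add, abs_of_neg (by linarith : t₁ - t₂ < 0)]
      have := key2 t₂ (-t₁) h2 (by linarith)
      calc F * -(t₁ - t₂) = F * (t₂ + -t₁) := by ring
        _ ≤ _ := this
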